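/- Assume ⟪y_i − y_{i−1}, w⟫ + k·a(y_i, w) = k·⟪f_i, w⟫ for all w ∈ W and all i = 1, …, N. Then Σ_{i=1}^{N} ( ‖y_i − y_{i−1}‖² + k·a(y_i, y_i) ) + ‖y_N‖² ≤ ‖y₀‖² + (1/c)·Σ_{i=1}^{N} k·‖f_i‖². (This is the abstract form of the stability estimate (5.21) for the dG(0) scheme applied to the homogeneous-Dirichlet part of the state equation in the proof of Lemma 3.2.) -/

import Mathlib

open scoped RealInnerProductSpace

/-- Abstract stability estimate (5.21) for the dG(0) scheme applied to the
homogeneous-Dirichlet part of the state equation: if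
`⟪yᵢ - yᵢ₋₁, w⟫ + k·a(yᵢ, w) = k·⟪fᵢ, w⟫` for all `w ∈ W` and `i = 1, …, N`, with
`a` symmetric and coercive on `W` with constant `c > 0`, and `yᵢ ∈ W` for `i ≥ 1`, then
`Σ (‖yᵢ - yᵢ₋₁‖² + k·a(yᵢ,yᵢ)) + ‖y_N‖² ≤ ‖y₀‖² + (1/c)·Σ k‖fᵢ‖²`. -/
theorem dG0_stability_interior_part
    {H : Type*} [NormedAddCommGroup H] [InnerProductSpace ℝ H]
    (a : H →ₗ[ℝ] H →ₗ[ℝ] ℝ)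
    (ha_symm : ∀ x y : H, a x y = a y x)
    (W : Submodule ℝ H) (c : ℝ) (hc : 0 < c)
    (ha_coercive : ∀ v ∈ W, c * ‖v‖ ^ 2 ≤ a v v)
    (k : ℝ) (hk : 0 < k) (N : ℕ) (hN : 1 ≤ N)
    (y : ℕ → H) (hy_mem : ∀ i, 1 ≤ i → i ≤ N → y i ∈ W)
    (f : ℕ → H)
    (hscheme : ∀ i ∈ Finset.Icc 1 N, ∀ w ∈ W,
      ⟪y i - y (i - 1), w⟫ + k * a (y i) w = k * ⟪f i, w⟫) :
    (∑ i ∈ Finset.Icc 1 N, (‖y i - y (i - 1)‖ ^ 2 + k * a (y i) (y i))) + ‖y N‖ ^ 2 ≤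
      ‖y 0‖ ^ 2 + (1 / c) * ∑ i ∈ Finset.Icc 1 N, k * ‖f i‖ ^ 2 := by
  have key : ∀ i ∈ Finset.Icc 1 N,
      ‖y i - y (i - 1)‖ ^ 2 + k * a (y i) (y i)
        ≤ (1 / c) * (k * ‖f i‖ ^ 2) + (‖y (i - 1)‖ ^ 2 - ‖y i‖ ^ 2) := by
    intro i hi
    obtain ⟨hi1, hiN⟩ := Finset.mem_Icc.mp hi
    have hiW : y i ∈ W := hy_mem i hi1 hiN
    have hE := hscheme i hi (y i) hiW
    have hip : ⟪y i - y (i - 1), y i⟫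
        = (‖y i - y (i - 1)‖ ^ 2 + ‖y i‖ ^ 2 - ‖y (i - 1)‖ ^ 2) / 2 := by
      have h1 : ‖y i - y (i - 1)‖ ^ 2
          = ‖y i‖ ^ 2 - 2 * ⟪y i, y (i - 1)⟫ + ‖y (i - 1)‖ ^ 2 := by
        rw [norm_sub_sq_real]
      have h2 : ⟪y i - y (i - 1), y i⟫ = ‖y i‖ ^ 2 - ⟪y i, y (i - 1)⟫ := by
        rw [inner_sub_left, real_inner_self_eq_norm_sq, real_inner_comm (y (i-1))]
      linarith
    have hco : c * ‖y i‖ ^ 2 ≤ a (y i) (y i) := ha_coercive (y i) hiW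
    have hcs : ⟪f i, y i⟫ ≤ ‖f i‖ * ‖y i‖ := real_inner_le_norm _ _
    have hcc : c * (1 / c) = 1 := mul_one_div_cancel hc.ne'
    have h1 : 2 * ‖f i‖ * ‖y i‖ ≤ (1 / c) * ‖f i‖ ^ 2 + c * ‖y i‖ ^ 2 := by
      have heq : c * ((1 / c) * ‖f i‖ ^ 2 + c * ‖y i‖ ^ 2)
          = ‖f i‖ ^ 2 + c ^ 2 * ‖y i‖ ^ 2 := by
        field_simp
      have h0 : c * (2 * ‖f i‖ * ‖y i‖) ≤ c * ((1 / c) * ‖f i‖ ^ 2 + c * ‖y i‖ ^ 2) := by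
        rw [heq]; nlinarith [sq_nonneg (‖f i‖ - c * ‖y i‖)]
      exact le_of_mul_le_mul_left h0 hc
    have h2 : k * ⟪f i, y i⟫ ≤ k * (‖f i‖ * ‖y i‖) :=
      mul_le_mul_of_nonneg_left hcs hk.le
    have h3 := mul_le_mul_of_nonneg_left h1 hk.le
    have h4 := mul_le_mul_of_nonneg_left hco hk.le
    nlinarith [h2, h3, h4, hE, hip]
  have hsum := Finset.sum_le_sum key
  have tel : ∀ n : ℕ, ∑ i ∈ Finset.Icc 1 n, (‖y (i - 1)‖ ^ 2 - ‖y i‖ ^ 2)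
      = ‖y 0‖ ^ 2 - ‖y n‖ ^ 2 := by
    intro n
    induction n with
    | zero => simp
    | succ m ih =>
      rw [Finset.sum_Icc_succ_top (by omega), ih]
      simp only [Nat.add_sub_cancel]
      ring
  have e1 : ∑ x ∈ Finset.Icc 1 N, 1 / c * (k * ‖f x‖ ^ 2)
      = 1 / c * ∑ i ∈ Finset.Icc 1 N, k * ‖f i‖ ^ 2 := (Finset.mul_sum _ _ _).symm
  rw [Finset.sum_add_distrib, Finset.sum_add_distrib, tel, e1] at hsum
  rw [Finset.sum_add_distrib]
  linarith
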